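/- arXiv:2506.06041 — 4 statements merged into one kernel-verified Lean document; each statement's English description precedes it below -/
import Mathlib

section
/- For every corner tree T with vertices V(T) = {v_1, ..., v_n} and root v_1, and every data array z : [0,T1] × [0,T2] → ℝ^d on the integer grid, the corner tree sum equals the total sum of the corner-tree pre-sum: CTS(T, z) = ∑_{r ∈ [0,T1]×[0,T2]} CTPS(T, z)_r. -/
open scoped Classical

/-- The eight cardinal directions. -/
inductive Card : Type where
  | N | NE | E | SE | S | SW | W | NW
  deriving DecidableEq

/-- The predicate on pairs of points of `ℤ²` denoted by a cardinal direction. -/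
def Card.pred : Card → ℤ × ℤ → ℤ × ℤ → Prop
  | .N,  r, s => r.1 = s.1 ∧ r.2 < s.2
  | .NE, r, s => r.1 < s.1 ∧ r.2 < s.2
  | .E,  r, s => r.1 < s.1 ∧ r.2 = s.2
  | .SE, r, s => r.1 < s.1 ∧ r.2 > s.2
  | .S,  r, s => r.1 = s.1 ∧ r.2 > s.2
  | .SW, r, s => r.1 > s.1 ∧ r.2 > s.2
  | .W,  r, s => r.1 > s.1 ∧ r.2 = s.2
  | .NW, r, s => r.1 > s.1 ∧ r.2 < s.2

/-- A corner tree: a finite rooted tree (edges directed away from the root) with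
vertex labels in `F` and edge labels in `L`.  A node carries its vertex label, the
number `k` of children, the labels of the `k` outgoing edges, and the `k` subtrees. -/
inductive CTree (L F : Type) : Type where
  | node (f : F) (k : ℕ) (dir : Fin k → L) (child : Fin k → CTree L F)

namespace CTree

variable {L F G : Type}

/-- The vertex set `V(T)` of a corner tree; `none` is the root, and `some ⟨i, v⟩` is
the vertex `v` of the `i`-th subtree. -/
def Vertex : CTree L F → Type
  | node _ k _ child => Option ((i : Fin k) × Vertex (child i))

/-- The root vertex `v₁` of a corner tree. -/
def rootVertex : (T : CTree L F) → T.Vertex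
  | node _ _ _ _ => none

instance fintypeVertex : (T : CTree L F) → Fintype T.Vertex
  | node _ k _ child =>
    haveI : ∀ i : Fin k, Fintype (Vertex (child i)) := fun i => fintypeVertex (child i)
    inferInstanceAs (Fintype (Option ((i : Fin k) × Vertex (child i))))

/-- `ALLOWED(T, r)`: the conjunction, over all edges `e` of `T`, of the predicate of
the edge label of `e` applied to `(r^(source e), r^(target e))`. -/
def Allowed (pred : L → G → G → Prop) : (T : CTree L F) → (T.Vertex → G) → Prop
  | node _ k dir child, r => ∀ i : Fin k,
      pred (dir i) (r none) (r (some ⟨i, rootVertex (child i)⟩)) ∧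
      Allowed pred (child i) (fun v => r (some ⟨i, v⟩))

end CTree

/-- The integer grid `[0,T₁] × [0,T₂]`. -/
abbrev Grid (T₁ T₂ : ℕ) : Type := Fin (T₁ + 1) × Fin (T₂ + 1)

/-- A grid point, viewed as a point of `ℤ²`. -/
def gridToZ {T₁ T₂ : ℕ} (t : Grid T₁ T₂) : ℤ × ℤ := ((t.1 : ℤ), (t.2 : ℤ))

/-- The product `∏_{i=1}^n 𝔳(vᵢ)(z_{r^i})` of the vertex-label evaluations along an
assignment `r : V(T) → [0,T₁]×[0,T₂]`. -/
noncomputable def vertexProd {d T₁ T₂ : ℕ} (z : Grid T₁ T₂ → Fin d → ℝ) :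
    (T : CTree Card ((Fin d → ℝ) → ℝ)) → (T.Vertex → Grid T₁ T₂) → ℝ
  | .node f k _ child, r =>
      f (z (r none)) * ∏ i : Fin k, vertexProd z (child i) (fun v => r (some ⟨i, v⟩))

/-- The corner tree sum
`CTS(T, z) = ∑_{r : V(T) → [0,T₁]×[0,T₂], ALLOWED(T,r)} ∏ᵢ 𝔳(vᵢ)(z_{r^i})`. -/
noncomputable def CTS {d T₁ T₂ : ℕ} (T : CTree Card ((Fin d → ℝ) → ℝ))
    (z : Grid T₁ T₂ → Fin d → ℝ) : ℝ :=
  ∑ r ∈ Finset.univ.filter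
      (fun r : T.Vertex → Grid T₁ T₂ => CTree.Allowed Card.pred T (fun v => gridToZ (r v))),
    vertexProd z T r

/-- The corner-tree pre-sum `CTPS(T, z)`, defined recursively:
`CTPS(T,z)_t = 𝔳(v₁)(z_t) ⬝ ∏_{e=(v₁,vᵢ)} CUMSUM(𝔢(e), CTPS(T|_{vᵢ}, z))_t`,
where `CUMSUM(X, x)_t = ∑_{r : X(t,r)} x_r`; for a single-vertex tree the product is
empty and `CTPS(T,z)_t = 𝔳(v₁)(z_t)`. -/
noncomputable def CTPS {d T₁ T₂ : ℕ} (z : Grid T₁ T₂ → Fin d → ℝ) :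
    CTree Card ((Fin d → ℝ) → ℝ) → Grid T₁ T₂ → ℝ
  | .node f k dir child, t =>
      f (z t) * ∏ i : Fin k,
        ∑ r ∈ Finset.univ.filter (fun r : Grid T₁ T₂ => Card.pred (dir i) (gridToZ t) (gridToZ r)),
          CTPS z (child i) r

open Finset in
private lemma ite_sum_zero {α : Type*} (s : Finset α) {c : Prop} [Decidable c] (f : α → ℝ) :
    (if c then ∑ x ∈ s, f x else 0) = ∑ x ∈ s, if c then f x else 0 := by
  split <;> simp

open Finset in
private lemma sum_fiber_ite {α β : Type*} [Fintype α] [Fintype β] [DecidableEq β]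
    (π : α → β) (P : β → Prop) (A : α → Prop) (v : α → ℝ) :
    (∑ x : α, if P (π x) ∧ A x then v x else 0)
      = ∑ r ∈ Finset.univ.filter P, ∑ x : α, if A x ∧ π x = r then v x else 0 := by
  rw [Finset.sum_filter]
  simp_rw [ite_sum_zero]
  rw [Finset.sum_comm]
  refine Finset.sum_congr rfl fun x _ => ?_
  have key : ∀ r : β, (if P r then (if A x ∧ π x = r then v x else 0) else 0)
      = if r = π x then (if P (π x) ∧ A x then v x else 0) else 0 := by
    intro r
    by_cases h1 : r = π x <;> by_cases h2 : P r <;> by_cases h3 : A x <;>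
      simp_all [eq_comm]
  simp_rw [key]
  rw [Finset.sum_ite_eq' Finset.univ (π x)]
  simp

private lemma ite_and_swap {c : ℝ} {a b : Prop} [Decidable a] [Decidable b] :
    (if a ∧ b then c else 0) = if b then (if a then c else 0) else 0 := by
  by_cases a <;> by_cases b <;> simp_all

open Finset in
lemma ctps_eq_sum {d T₁ T₂ : ℕ} (z : Grid T₁ T₂ → Fin d → ℝ) :
    ∀ (T : CTree Card ((Fin d → ℝ) → ℝ)) (t : Grid T₁ T₂),
    CTPS z T t = ∑ r : T.Vertex → Grid T₁ T₂,
      if CTree.Allowed Card.pred T (fun v => gridToZ (r v)) ∧ r T.rootVertex = t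
      then vertexProd z T r else 0 := by
  intro T
  induction T with
  | node f k dir child ih =>
    intro t
    let e : (Grid T₁ T₂ × ∀ i : Fin k, (child i).Vertex → Grid T₁ T₂) ≃
        ((CTree.node f k dir child).Vertex → Grid T₁ T₂) :=
      ((Equiv.refl (Grid T₁ T₂)).prodCongr
        (Equiv.piCurry fun (_ : Fin k) (_ : CTree.Vertex (child _)) => Grid T₁ T₂).symm).trans
        (Equiv.piOptionEquivProd (β := fun _ => Grid T₁ T₂)).symm
    rw [← Equiv.sum_comp e, Fintype.sum_prod_type]
    have he : ∀ (t' : Grid T₁ T₂) (h : ∀ i : Fin k, (child i).Vertex → Grid T₁ T₂),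
        (if CTree.Allowed Card.pred (CTree.node f k dir child)
              (fun v => gridToZ ((e (t', h)) v)) ∧
            (e (t', h)) (CTree.node f k dir child).rootVertex = t
         then vertexProd z (CTree.node f k dir child) (e (t', h)) else 0)
        = if t' = t then
            (if (∀ i : Fin k,
                  Card.pred (dir i) (gridToZ t') (gridToZ (h i (child i).rootVertex)) ∧
                  CTree.Allowed Card.pred (child i) (fun v => gridToZ (h i v)))
             then f (z t') * ∏ i : Fin k, vertexProd z (child i) (h i) else 0)
          else 0 := by
      intro t' h
      rw [← ite_and_swap]
      exact if_congr Iff.rfl rfl rfl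
    simp_rw [he]
    simp_rw [← ite_sum_zero]
    rw [Finset.sum_ite_eq' Finset.univ t, if_pos (Finset.mem_univ t)]
    have key : ∀ x : ∀ i : Fin k, (child i).Vertex → Grid T₁ T₂,
        (if (∀ i : Fin k,
              Card.pred (dir i) (gridToZ t) (gridToZ (x i (child i).rootVertex)) ∧
              CTree.Allowed Card.pred (child i) (fun v => gridToZ (x i v)))
         then f (z t) * ∏ i : Fin k, vertexProd z (child i) (x i) else 0)
        = f (z t) * ∏ i : Fin k,
            (if Card.pred (dir i) (gridToZ t) (gridToZ (x i (child i).rootVertex)) ∧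
                CTree.Allowed Card.pred (child i) (fun v => gridToZ (x i v))
             then vertexProd z (child i) (x i) else 0) := by
      intro x
      by_cases H : ∀ i : Fin k,
          Card.pred (dir i) (gridToZ t) (gridToZ (x i (child i).rootVertex)) ∧
          CTree.Allowed Card.pred (child i) (fun v => gridToZ (x i v))
      · rw [if_pos H]
        exact congrArg _ (Finset.prod_congr rfl fun i _ => (if_pos (H i)).symm)
      · rw [if_neg H, not_forall] at *
        obtain ⟨i, hi⟩ := H
        have hz : (if Card.pred (dir i) (gridToZ t) (gridToZ (x i (child i).rootVertex)) ∧
            CTree.Allowed Card.pred (child i) (fun v => gridToZ (x i v))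
            then vertexProd z (child i) (x i) else 0) = (0 : ℝ) := if_neg hi
        rw [Finset.prod_eq_zero (Finset.mem_univ i) hz, mul_zero]
    calc CTPS z (CTree.node f k dir child) t
        = f (z t) * ∏ i : Fin k,
            ∑ r ∈ Finset.univ.filter
              (fun r : Grid T₁ T₂ => Card.pred (dir i) (gridToZ t) (gridToZ r)),
              CTPS z (child i) r := by rw [CTPS]
      _ = f (z t) * ∏ i : Fin k,
            ∑ r ∈ Finset.univ.filter
              (fun r : Grid T₁ T₂ => Card.pred (dir i) (gridToZ t) (gridToZ r)),
              ∑ y : (child i).Vertex → Grid T₁ T₂,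
                (if (CTree.Allowed Card.pred (child i) fun v => gridToZ (y v)) ∧
                    y (child i).rootVertex = r
                 then vertexProd z (child i) y else 0) :=
          congrArg _ (Finset.prod_congr rfl fun i _ =>
            Finset.sum_congr rfl fun r _ => ih i r)
      _ = f (z t) * ∏ i : Fin k,
            ∑ y : (child i).Vertex → Grid T₁ T₂,
              (if Card.pred (dir i) (gridToZ t) (gridToZ (y (child i).rootVertex)) ∧
                  (CTree.Allowed Card.pred (child i) fun v => gridToZ (y v))
               then vertexProd z (child i) y else 0) :=
          congrArg _ (Finset.prod_congr rfl fun i _ =>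
            (sum_fiber_ite (fun y : (child i).Vertex → Grid T₁ T₂ => y (child i).rootVertex)
              (fun s => Card.pred (dir i) (gridToZ t) (gridToZ s))
              (fun y => CTree.Allowed Card.pred (child i) fun v => gridToZ (y v))
              (fun y => vertexProd z (child i) y)).symm)
      _ = f (z t) * ∑ x : (∀ i : Fin k, (child i).Vertex → Grid T₁ T₂),
            ∏ i : Fin k,
              (if Card.pred (dir i) (gridToZ t) (gridToZ (x i (child i).rootVertex)) ∧
                  (CTree.Allowed Card.pred (child i) fun v => gridToZ (x i v))
               then vertexProd z (child i) (x i) else 0) := by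
          rw [Finset.prod_univ_sum, Fintype.piFinset_univ]
      _ = ∑ x : (∀ i : Fin k, (child i).Vertex → Grid T₁ T₂),
            f (z t) * ∏ i : Fin k,
              (if Card.pred (dir i) (gridToZ t) (gridToZ (x i (child i).rootVertex)) ∧
                  (CTree.Allowed Card.pred (child i) fun v => gridToZ (x i v))
               then vertexProd z (child i) (x i) else 0) := Finset.mul_sum _ _ _
      _ = ∑ x : (∀ i : Fin k, (child i).Vertex → Grid T₁ T₂),
            (if (∀ i : Fin k,
                  Card.pred (dir i) (gridToZ t) (gridToZ (x i (child i).rootVertex)) ∧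
                  CTree.Allowed Card.pred (child i) (fun v => gridToZ (x i v)))
             then f (z t) * ∏ i : Fin k, vertexProd z (child i) (x i) else 0) :=
          Finset.sum_congr rfl fun x _ => (key x).symm

/-- For every corner tree `T` and data `z : [0,T₁]×[0,T₂] → ℝ^d`,
the corner tree sum equals the total sum of the corner-tree pre-sum:
`CTS(T, z) = ∑_{r ∈ [0,T₁]×[0,T₂]} CTPS(T, z)_r`. -/
theorem cts_eq_sum_ctps {d T₁ T₂ : ℕ} (T : CTree Card ((Fin d → ℝ) → ℝ))
    (z : Grid T₁ T₂ → Fin d → ℝ) :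
    CTS T z = ∑ t : Grid T₁ T₂, CTPS z T t := by
  simp_rw [ctps_eq_sum z T]
  rw [Finset.sum_comm]
  rw [CTS, Finset.sum_filter]
  refine Finset.sum_congr rfl fun r _ => ?_
  have : ∀ t : Grid T₁ T₂,
      (if CTree.Allowed Card.pred T (fun v => gridToZ (r v)) ∧ r T.rootVertex = t
       then vertexProd z T r else 0)
      = if t = r T.rootVertex
        then (if CTree.Allowed Card.pred T (fun v => gridToZ (r v)) then vertexProd z T r else 0)
        else 0 := by
    intro t
    by_cases h1 : t = r T.rootVertex <;>
      by_cases h2 : CTree.Allowed Card.pred T (fun v => gridToZ (r v)) <;>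
      simp_all [eq_comm]
  simp_rw [this]
  rw [Finset.sum_ite_eq' Finset.univ (r T.rootVertex)]
  simp
end

section
/- Let (S, ⊕, ⊙, 0_S, 1_S) be a commutative semiring and let T be a corner tree whose vertex labels are functions f : ℝ^d → S. Then for every data array z : [0,T1] × [0,T2] → ℝ^d on the integer grid, the semiring corner tree sum equals the ⊕-total of the semiring corner-tree pre-sum: CTS^S(T, z) = ⊕_{r ∈ [0,T1]×[0,T2]} CTPS^S(T, z)_r. -/
open scoped Classical

variable {S : Type} [CommSemiring S]

/-- The semiring product `⊙_{i=1}^n 𝔳(vᵢ)(z_{r^i})` of the vertex-label evaluations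
along an assignment `r : V(T) → [0,T₁]×[0,T₂]`. -/
noncomputable def vertexProdS {d T₁ T₂ : ℕ} (z : Grid T₁ T₂ → Fin d → ℝ) :
    (T : CTree Card ((Fin d → ℝ) → S)) → (T.Vertex → Grid T₁ T₂) → S
  | .node f k _ child, r =>
      f (z (r none)) * ∏ i : Fin k, vertexProdS z (child i) (fun v => r (some ⟨i, v⟩))

/-- The semiring corner tree sum
`CTS^S(T, z) = ⊕_{r : V(T) → [0,T₁]×[0,T₂], ALLOWED(T,r)} ⊙ᵢ 𝔳(vᵢ)(z_{r^i})`. -/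
noncomputable def CTSS {d T₁ T₂ : ℕ} (T : CTree Card ((Fin d → ℝ) → S))
    (z : Grid T₁ T₂ → Fin d → ℝ) : S :=
  ∑ r ∈ Finset.univ.filter
      (fun r : T.Vertex → Grid T₁ T₂ => CTree.Allowed Card.pred T (fun v => gridToZ (r v))),
    vertexProdS z T r

/-- The semiring corner-tree pre-sum `CTPS^S(T, z)`, defined recursively:
`CTPS^S(T,z)_t = 𝔳(v₁)(z_t) ⊙ ⊙_{e=(v₁,vᵢ)} CUMSUM^S(𝔢(e), CTPS^S(T|_{vᵢ}, z))_t`,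
where `CUMSUM^S(X, x)_t = ⊕_{r : X(t,r)} x_r`; for a single-vertex tree the product
is empty and `CTPS^S(T,z)_t = 𝔳(v₁)(z_t)`. -/
noncomputable def CTPSS {d T₁ T₂ : ℕ} (z : Grid T₁ T₂ → Fin d → ℝ) :
    CTree Card ((Fin d → ℝ) → S) → Grid T₁ T₂ → S
  | .node f k dir child, t =>
      f (z t) * ∏ i : Fin k,
        ∑ r ∈ Finset.univ.filter (fun r : Grid T₁ T₂ => Card.pred (dir i) (gridToZ t) (gridToZ r)),
          CTPSS z (child i) r

-- auxiliary lemma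
lemma ctpss_eq_sum {d T₁ T₂ : ℕ} (z : Grid T₁ T₂ → Fin d → ℝ) :
    ∀ (T : CTree Card ((Fin d → ℝ) → S)) (t : Grid T₁ T₂),
    CTPSS (S := S) z T t = ∑ r : T.Vertex → Grid T₁ T₂,
      if r T.rootVertex = t ∧ CTree.Allowed Card.pred T (fun v => gridToZ (r v))
      then vertexProdS z T r else 0
  | .node f k dir child, t => by
    have h1 : ∀ i : Fin k,
        (∑ s ∈ Finset.univ.filter
            (fun s : Grid T₁ T₂ => Card.pred (dir i) (gridToZ t) (gridToZ s)),
          CTPSS (S := S) z (child i) s)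
        = ∑ ri : (child i).Vertex → Grid T₁ T₂,
            if Card.pred (dir i) (gridToZ t) (gridToZ (ri (child i).rootVertex)) ∧
               CTree.Allowed Card.pred (child i) (fun v => gridToZ (ri v))
            then vertexProdS z (child i) ri else 0 := by
      intro i
      rw [Finset.sum_filter]
      simp only [ctpss_eq_sum z (child i)]
      have pull : ∀ (c : Prop) [Decidable c] (g : ((child i).Vertex → Grid T₁ T₂) → S),
          (if c then (∑ r : (child i).Vertex → Grid T₁ T₂, g r) else 0)
          = ∑ r : (child i).Vertex → Grid T₁ T₂, if c then g r else 0 := by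
        intro c _ g; split_ifs <;> simp
      simp only [pull]
      rw [Finset.sum_comm]
      refine Finset.sum_congr rfl fun ri _ => ?_
      have key : ∀ s : Grid T₁ T₂,
          (if Card.pred (dir i) (gridToZ t) (gridToZ s) then
            (if ri (child i).rootVertex = s ∧
                CTree.Allowed Card.pred (child i) (fun v => gridToZ (ri v))
             then vertexProdS z (child i) ri else 0) else 0)
          = if ri (child i).rootVertex = s then
              (if Card.pred (dir i) (gridToZ t) (gridToZ (ri (child i).rootVertex)) ∧
                  CTree.Allowed Card.pred (child i) (fun v => gridToZ (ri v))
               then vertexProdS z (child i) ri else 0) else 0 := by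
        intro s
        by_cases h : ri (child i).rootVertex = s
        · subst h
          by_cases hp : Card.pred (dir i) (gridToZ t) (gridToZ (ri (child i).rootVertex)) <;>
            simp [hp]
        · simp [h]
      simp only [key]
      rw [Finset.sum_ite_eq]
      simp
    show (f (z t) * ∏ i : Fin k, _) = _
    simp only [h1]
    rw [Fintype.prod_sum, Finset.mul_sum]
    -- the assignment equivalence
    let e : (Grid T₁ T₂ × ∀ i, (child i).Vertex → Grid T₁ T₂) ≃
        ((CTree.node f k dir child).Vertex → Grid T₁ T₂) :=
      { toFun := fun p v => match v with
          | none => p.1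
          | some ⟨i, w⟩ => p.2 i w
        invFun := fun r => (r none, fun i w => r (some ⟨i, w⟩))
        left_inv := fun p => rfl
        right_inv := fun r => by
          funext v
          match v with
          | none => rfl
          | some ⟨i, w⟩ => rfl }
    rw [← Equiv.sum_comp e (fun r => if r (CTree.node f k dir child).rootVertex = t ∧
        CTree.Allowed Card.pred (CTree.node f k dir child) (fun v => gridToZ (r v))
        then vertexProdS z (CTree.node f k dir child) r else 0)]
    rw [Fintype.sum_prod_type]
    have hA : ∀ (t' : Grid T₁ T₂) (g : ∀ i, (child i).Vertex → Grid T₁ T₂),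
        (if (e (t', g)) (CTree.node f k dir child).rootVertex = t ∧
            CTree.Allowed Card.pred (CTree.node f k dir child) (fun v => gridToZ ((e (t', g)) v))
         then vertexProdS z (CTree.node f k dir child) (e (t', g)) else 0)
        = if t' = t then
            (if (∀ i : Fin k,
                Card.pred (dir i) (gridToZ t) (gridToZ (g i (child i).rootVertex)) ∧
                CTree.Allowed Card.pred (child i) (fun v => gridToZ (g i v)))
             then f (z t) * ∏ i : Fin k, vertexProdS z (child i) (g i) else 0) else 0 := by
      intro t' g
      by_cases ht : t' = t
      · subst ht
        simp only [if_pos rfl]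
        have hroot : (e (t', g)) (CTree.node f k dir child).rootVertex = t' := rfl
        have hall : CTree.Allowed Card.pred (CTree.node f k dir child)
            (fun v => gridToZ ((e (t', g)) v)) ↔
            (∀ i : Fin k,
              Card.pred (dir i) (gridToZ t') (gridToZ (g i (child i).rootVertex)) ∧
              CTree.Allowed Card.pred (child i) (fun v => gridToZ (g i v))) := Iff.rfl
        by_cases hc : (∀ i : Fin k,
            Card.pred (dir i) (gridToZ t') (gridToZ (g i (child i).rootVertex)) ∧
            CTree.Allowed Card.pred (child i) (fun v => gridToZ (g i v)))
        · rw [if_pos ⟨hroot, hall.mpr hc⟩, if_pos hc]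
          rfl
        · rw [if_neg (fun h => hc (hall.mp h.2)), if_neg hc]
          simp
      · rw [if_neg ht, if_neg (fun h => ht h.1)]
    simp only [hA]
    have pull2 : ∀ (c : Prop) [Decidable c] (g : (∀ i, (child i).Vertex → Grid T₁ T₂) → S),
        (∑ g1 : ∀ i, (child i).Vertex → Grid T₁ T₂, if c then g g1 else 0)
        = if c then (∑ g1 : ∀ i, (child i).Vertex → Grid T₁ T₂, g g1) else 0 := by
      intro c _ g; split_ifs <;> simp
    simp only [pull2]
    rw [Finset.sum_ite_eq' Finset.univ t]
    simp only [Finset.mem_univ, if_true]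
    refine Finset.sum_congr rfl fun g _ => ?_
    rw [Fintype.prod_ite_zero]
    split_ifs <;> simp

/-- Let `S` be a commutative semiring and `T` a corner tree whose
vertex labels are functions `ℝ^d → S`.  Then for every data array
`z : [0,T₁]×[0,T₂] → ℝ^d`, the semiring corner tree sum equals the `⊕`-total of the
semiring corner-tree pre-sum: `CTS^S(T, z) = ⊕_{r ∈ [0,T₁]×[0,T₂]} CTPS^S(T, z)_r`. -/
theorem ctss_eq_sum_ctpss {d T₁ T₂ : ℕ} (T : CTree Card ((Fin d → ℝ) → S))
    (z : Grid T₁ T₂ → Fin d → ℝ) :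
    CTSS T z = ∑ t : Grid T₁ T₂, CTPSS z T t := by
  simp only [ctpss_eq_sum z T]
  rw [Finset.sum_comm]
  rw [CTSS, Finset.sum_filter]
  refine Finset.sum_congr rfl fun r _ => ?_
  have : ∀ t : Grid T₁ T₂,
      (if r T.rootVertex = t ∧ CTree.Allowed Card.pred T (fun v => gridToZ (r v))
       then vertexProdS z T r else 0)
      = if r T.rootVertex = t then
          (if CTree.Allowed Card.pred T (fun v => gridToZ (r v))
           then vertexProdS z T r else 0) else 0 := by
    intro t
    by_cases h : r T.rootVertex = t <;> simp [h]
  simp only [this]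
  rw [Finset.sum_ite_eq]
  simp
end

section
/- Let n ≥ 1 and let π be a permutation of {1, ..., n}. Let T be the corner tree with three vertices: root a with two children b and c, where the edge (a, b) is labeled SE and the edge (a, c) is labeled NW. Then the number of occurrences of T in π equals the number of occurrences of the permutation pattern 321 in π, i.e., the number of triples i < j < k in {1, ..., n} with π(i) > π(j) > π(k). -/
open scoped Classical

/-- The corner tree with three vertices: a root `a` with two children `b` and `c`,
edge `(a, b)` labeled `SE` and edge `(a, c)` labeled `NW`.  (Vertex labels play no
role for pattern counting, so they are trivial.) -/
def treeSE_NW : CTree Card Unit :=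
  CTree.node () 2 ![Card.SE, Card.NW]
    ![CTree.node () 0 ![] ![], CTree.node () 0 ![] ![]]


def vRoot : treeSE_NW.Vertex := none
def vB : treeSE_NW.Vertex := some ⟨0, none⟩
def vC : treeSE_NW.Vertex := some ⟨1, none⟩

lemma vertex_cases (v : treeSE_NW.Vertex) : v = vRoot ∨ v = vB ∨ v = vC := by
  rcases v with _ | ⟨i, w⟩
  · left; rfl
  · fin_cases i
    · right; left; rcases w with _ | ⟨j, _⟩
      · rfl
      · exact absurd j.2 (by simp)
    · right; right; rcases w with _ | ⟨j, _⟩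
      · rfl
      · exact absurd j.2 (by simp)

def toPhi {n : ℕ} (t : Fin n × Fin n × Fin n) : treeSE_NW.Vertex → Fin n := fun v =>
  match v with
  | none => t.2.1
  | some ⟨i, _⟩ => if i = 0 then t.2.2 else t.1

lemma allowed_iff {n : ℕ} (r : treeSE_NW.Vertex → ℤ × ℤ) :
    CTree.Allowed Card.pred treeSE_NW r ↔
      (Card.pred Card.SE (r vRoot) (r vB) ∧ Card.pred Card.NW (r vRoot) (r vC)) := by
  constructor
  · intro h
    exact ⟨(h 0).1, (h 1).1⟩
  · rintro ⟨h0, h1⟩ i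
    fin_cases i
    · exact ⟨h0, fun j => j.elim0⟩
    · exact ⟨h1, fun j => j.elim0⟩

/-- For `n ≥ 1` and a permutation `π` of `{1, …, n}` (modeled on
`Fin n`, identifying an index `i` with the plot point `(i, π i) ∈ ℤ²`), the number of
occurrences of the corner tree `treeSE_NW` in `π` — maps `φ` from the vertices of the
tree to indices such that every edge predicate holds on the corresponding plot
points — equals the number of occurrences of the pattern `321` in `π`, i.e. the
number of triples `i < j < k` with `π i > π j > π k`. -/
theorem cornerTree_counts_321 (n : ℕ) (hn : 1 ≤ n) (π : Equiv.Perm (Fin n)) :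
    (Finset.univ.filter
        (fun φ : treeSE_NW.Vertex → Fin n =>
          CTree.Allowed Card.pred treeSE_NW
            (fun v => (((φ v : ℕ) : ℤ), ((π (φ v) : ℕ) : ℤ))))).card =
    (Finset.univ.filter
        (fun t : Fin n × Fin n × Fin n =>
          t.1 < t.2.1 ∧ t.2.1 < t.2.2 ∧ π t.2.1 < π t.1 ∧ π t.2.2 < π t.2.1)).card := by
  apply Finset.card_bij' (fun φ _ => (φ vC, φ vRoot, φ vB)) (fun t _ => toPhi t)
  · intro φ hφ
    simp only [Finset.mem_filter, Finset.mem_univ, true_and] at hφ ⊢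
    rw [allowed_iff (n := n)] at hφ
    obtain ⟨⟨hab1, hab2⟩, hac1, hac2⟩ := hφ
    simp only [Nat.cast_lt, gt_iff_lt] at hab1 hab2 hac1 hac2
    exact ⟨Fin.lt_def.mpr hac1, Fin.lt_def.mpr hab1, Fin.lt_def.mpr hac2, Fin.lt_def.mpr hab2⟩
  · intro t ht
    simp only [Finset.mem_filter, Finset.mem_univ, true_and] at ht ⊢
    obtain ⟨h1, h2, h3, h4⟩ := ht
    rw [allowed_iff (n := n)]
    refine ⟨⟨?_, ?_⟩, ?_, ?_⟩ <;> simp [toPhi, vRoot, vB, vC] <;>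
      first
        | exact_mod_cast Fin.lt_def.mp h1
        | exact_mod_cast Fin.lt_def.mp h2
        | exact_mod_cast Fin.lt_def.mp h3
        | exact_mod_cast Fin.lt_def.mp h4
  · intro φ _
    funext v
    rcases vertex_cases v with rfl | rfl | rfl <;> rfl
  · intro t _
    rfl
end

section
/- Let x_1, ..., x_{T-1} be real numbers, k ≥ 1, and α_1, ..., α_k positive integers. For each t define the (k+1)×(k+1) upper unitriangular matrix A_t := I + ∑_{j=1}^k x_t^{α_{k+1-j}} E_{j,j+1}, where E_{j,j+1} is the matrix unit with a 1 in position (j, j+1) and zeros elsewhere. Then the (1, k+1)-entry of the product A_{T-1} ⋯ A_1 equals the iterated sum ∑_{1 ≤ t_1 < t_2 < ⋯ < t_k ≤ T-1} x_{t_1}^{α_1} x_{t_2}^{α_2} ⋯ x_{t_k}^{α_k}. In particular, every iterated sum of this form arises as an entry of a product of input-dependent state-transition matrices of a state-space model. -/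
open scoped Classical

/-- The `(k+1)×(k+1)` state-transition matrix
`A_t = I + ∑_{j=1}^k x_t^{α_{k+1-j}} E_{j,j+1}`, where `E_{j,j+1}` is the matrix unit
with a `1` in position `(j, j+1)`.  (With `0`-based indexing, the `1`-based position
`(j, j+1)` for `j = 1, …, k` is `(j.castSucc, j.succ)` for `j : Fin k`, and
`α_{k+1-(j+1)} = α_{k-j}`.) -/
noncomputable def ssmMatrix (k : ℕ) (x : ℕ → ℝ) (α : ℕ → ℕ) (t : ℕ) :
    Matrix (Fin (k + 1)) (Fin (k + 1)) ℝ :=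
  1 + ∑ j : Fin k, Matrix.single j.castSucc j.succ (x t ^ α (k - (j : ℕ)))

noncomputable def iterSum (x : ℕ → ℝ) (α : ℕ → ℕ) (n m : ℕ) : ℝ :=
  ∑ c ∈ Finset.univ.filter (fun c : Fin m → Fin n => StrictMono c),
    ∏ l : Fin m, x ((c l : ℕ) + 1) ^ α ((l : ℕ) + 1)

lemma strictMono_snoc' {m : ℕ} {β : Type*} [Preorder β] {f : Fin m → β} (hf : StrictMono f)
    {b : β} (hb : ∀ i, f i < b) : StrictMono (Fin.snoc f b) := by
  intro a c h
  rcases eq_or_ne c (Fin.last m) with rfl | hc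
  · rcases Fin.eq_castSucc_of_ne_last (Fin.ne_last_of_lt h) with ⟨a', rfl⟩
    simpa using hb a'
  · rcases Fin.eq_castSucc_of_ne_last hc with ⟨c', rfl⟩
    rcases Fin.eq_castSucc_of_ne_last (Fin.ne_last_of_lt h) with ⟨a', rfl⟩
    simp only [Fin.snoc_castSucc]
    exact hf (Fin.castSucc_lt_castSucc_iff.mp h)

lemma iterSum_zero_right (x : ℕ → ℝ) (α : ℕ → ℕ) (n : ℕ) : iterSum x α n 0 = 1 := by
  have h : ∀ c : Fin 0 → Fin n, StrictMono c := fun c a b h => a.elim0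
  simp [iterSum, Finset.filter_true_of_mem (fun c _ => h c)]

lemma iterSum_zero_left (x : ℕ → ℝ) (α : ℕ → ℕ) (m : ℕ) : iterSum x α 0 (m + 1) = 0 := by
  haveI : IsEmpty (Fin (m + 1) → Fin 0) := ⟨fun c => (c 0).elim0⟩
  simp [iterSum]

lemma iterSum_succ (x : ℕ → ℝ) (α : ℕ → ℕ) (n m : ℕ) :
    iterSum x α (n + 1) (m + 1) =
      iterSum x α n (m + 1) + x (n + 1) ^ α (m + 1) * iterSum x α n m := by
  classical
  unfold iterSum
  rw [← Finset.sum_filter_add_sum_filter_not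
    (Finset.univ.filter (fun c : Fin (m + 1) → Fin (n + 1) => StrictMono c))
    (fun c => c (Fin.last m) = Fin.last n), add_comm]
  congr 1
  · -- c (last m) ≠ last n : these are exactly strict mono maps into Fin n
    refine Finset.sum_bij' (i := fun c hc l => (⟨(c l : ℕ), ?_⟩ : Fin n))
      (j := fun d _ l => (d l).castSucc) ?_ ?_ ?_ ?_ ?_
    · simp only [Finset.mem_filter, Finset.mem_univ, true_and] at hc
      have h1 : c l ≤ c (Fin.last m) := hc.1.monotone (Fin.le_last l)
      have h2 : c (Fin.last m) < Fin.last n := lt_of_le_of_ne (Fin.le_last _) hc.2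
      exact lt_of_le_of_lt h1 h2
    · intro c hc
      simp only [Finset.mem_filter, Finset.mem_univ, true_and] at hc ⊢
      intro a b hab
      exact hc.1 hab
    · intro d hd
      simp only [Finset.mem_filter, Finset.mem_univ, true_and] at hd ⊢
      refine ⟨fun a b hab => Fin.castSucc_lt_castSucc_iff.mpr (hd hab), ?_⟩
      exact Fin.ne_last_of_lt (Fin.castSucc_lt_last _)
    · intro c hc
      funext l
      apply Fin.ext
      simp
    · intro d hd
      funext l
      apply Fin.ext
      simp
    · intro c hc
      rfl
  · -- c (last m) = last n
    rw [Finset.mul_sum]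
    refine Finset.sum_bij' (i := fun c hc (l : Fin m) => (⟨(c l.castSucc : ℕ), ?_⟩ : Fin n))
      (j := fun d _ => Fin.snoc (fun l => (d l).castSucc) (Fin.last n)) ?_ ?_ ?_ ?_ ?_
    · simp only [Finset.mem_filter, Finset.mem_univ, true_and] at hc
      have h1 : c l.castSucc < c (Fin.last m) := hc.1 (Fin.castSucc_lt_last l)
      rw [hc.2] at h1
      simpa [Fin.lt_iff_val_lt_val] using h1
    · intro c hc
      simp only [Finset.mem_filter, Finset.mem_univ, true_and] at hc ⊢
      intro a b hab
      exact hc.1 (Fin.castSucc_lt_castSucc_iff.mpr hab)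
    · intro d hd
      simp only [Finset.mem_filter, Finset.mem_univ, true_and] at hd ⊢
      refine ⟨strictMono_snoc' (fun a b hab => Fin.castSucc_lt_castSucc_iff.mpr (hd hab))
        (fun i => Fin.castSucc_lt_last _), ?_⟩
      simp
    · intro c hc
      simp only [Finset.mem_filter, Finset.mem_univ, true_and] at hc
      funext l
      refine Fin.lastCases ?_ (fun l => ?_) l
      · simp [hc.2]
      · apply Fin.ext
        simp
    · intro d hd
      funext l
      apply Fin.ext
      simp
    · intro c hc
      simp only [Finset.mem_filter, Finset.mem_univ, true_and] at hc
      rw [Fin.prod_univ_castSucc, mul_comm]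
      congr 1
      · rw [hc.2]
        simp

lemma prod_entry (k : ℕ) (x : ℕ → ℝ) (α : ℕ → ℕ) (n : ℕ) (a : Fin (k + 1)) :
    (((List.range n).reverse.map (fun i => ssmMatrix k x α (i + 1))).prod) a (Fin.last k)
      = iterSum x α n (k - (a : ℕ)) := by
  induction n generalizing a with
  | zero =>
      simp only [List.range_zero, List.reverse_nil, List.map_nil, List.prod_nil]
      rcases eq_or_ne a (Fin.last k) with rfl | ha
      · rw [Matrix.one_apply_eq]
        simp [iterSum_zero_right]
      · rw [Matrix.one_apply_ne ha]
        have hlt : (a : ℕ) < k := by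
          have := a.isLt
          have : (a : ℕ) ≠ k := fun h => ha (Fin.ext (by simp [h]))
          omega
        obtain ⟨m, hm⟩ : ∃ m, k - (a : ℕ) = m + 1 := ⟨k - (a : ℕ) - 1, by omega⟩
        rw [hm, iterSum_zero_left]
  | succ n ih =>
      have hrange : ((List.range (n + 1)).reverse.map (fun i => ssmMatrix k x α (i + 1))).prod
          = ssmMatrix k x α (n + 1) *
            ((List.range n).reverse.map (fun i => ssmMatrix k x α (i + 1))).prod := by
        rw [List.range_succ, List.reverse_append]
        simp
      rw [hrange]
      set P := ((List.range n).reverse.map (fun i => ssmMatrix k x α (i + 1))).prod with hP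
      rw [ssmMatrix, add_mul, one_mul, Matrix.add_apply, Finset.sum_mul, Matrix.sum_apply]
      rcases eq_or_ne a (Fin.last k) with rfl | ha
      · have hz : ∀ j : Fin k, j ∈ Finset.univ → (Matrix.single j.castSucc j.succ
            (x (n + 1) ^ α (k - (j : ℕ))) * P) (Fin.last k) (Fin.last k) = 0 := fun j _ =>
          Matrix.single_mul_apply_of_ne _ _ _ _ _ (Fin.castSucc_lt_last j).ne' _
        rw [Finset.sum_eq_zero hz, add_zero, ih]
        simp [iterSum_zero_right]
      · obtain ⟨a', rfl⟩ := Fin.eq_castSucc_of_ne_last ha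
        rw [Finset.sum_eq_single a' (fun j _ hj =>
            Matrix.single_mul_apply_of_ne _ _ _ _ _
              (fun h => hj (Fin.castSucc_injective _ h.symm)) _)
          (fun h => absurd (Finset.mem_univ a') h),
          Matrix.single_mul_apply_same, ih, ih]
        obtain ⟨m, hm⟩ : ∃ m, k - (a' : ℕ) = m + 1 := ⟨k - (a' : ℕ) - 1, by
          have := a'.isLt; omega⟩
        have h1 : k - ((a'.castSucc : Fin (k + 1)) : ℕ) = m + 1 := by
          rw [Fin.coe_castSucc]; exact hm
        have h2 : k - ((a'.succ : Fin (k + 1)) : ℕ) = m := by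
          rw [Fin.val_succ]; omega
        rw [h1, h2, hm]
        exact (iterSum_succ x α n m).symm

/-- Let `x₁, …, x_{T-1}` be real numbers, `k ≥ 1`, and
`α₁, …, α_k` positive integers.  Then the `(1, k+1)`-entry of the product
`A_{T-1} ⋯ A_1` (with `A_{T-1}` leftmost) equals the iterated sum
`∑_{1 ≤ t₁ < ⋯ < t_k ≤ T-1} x_{t₁}^{α₁} ⋯ x_{t_k}^{α_k}`, where a strictly
increasing `k`-tuple in `{1, …, T-1}` is encoded by a strictly monotone map
`c : Fin k → Fin (T-1)` via `t_l = c l + 1`. -/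
theorem ssm_entry_eq_iterated_sum (T k : ℕ) (hk : 1 ≤ k) (x : ℕ → ℝ) (α : ℕ → ℕ)
    (hα : ∀ i, 1 ≤ i → i ≤ k → 0 < α i) :
    (((List.range (T - 1)).reverse.map (fun i => ssmMatrix k x α (i + 1))).prod)
        0 (Fin.last k) =
      ∑ c ∈ Finset.univ.filter (fun c : Fin k → Fin (T - 1) => StrictMono c),
        ∏ l : Fin k, x ((c l : ℕ) + 1) ^ α ((l : ℕ) + 1) := by
  rw [prod_entry]
  simp only [Fin.val_zero, Nat.sub_zero]
  rfl
end
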